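/- Let (a,b,c) be a Markoff triple of reals and T a trace function for (a,b,c). Then the sum over all pairs of coprime integers (p,q) with 0 < p < q of (1 − √(1 − 4/T(p,q)²)) converges, and equals c/(a·b) − (1−√(1−4/a²))/2 − (1−√(1−4/b²))/2. -/

import Mathlib

/-- A vector of `ℤ²` is primitive if its coordinates are coprime. -/
def Primitive (v : ℤ × ℤ) : Prop := IsCoprime v.1 v.2

/-- A trace function for a triple `(a,b,c)` of reals: a function on `ℤ²` satisfying
`T(−v) = T(v)` for primitive `v`, with `T(0,1) = a`, `T(1,1) = b`, `T(1,0) = c`, and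
`T(v+w) = T(v)·T(w) − T(v−w)` whenever `v, w` are primitive with `det(v,w) = ±1`. -/
structure IsTraceFunction (a b c : ℝ) (T : ℤ × ℤ → ℝ) : Prop where
  neg_eq : ∀ v : ℤ × ℤ, Primitive v → T (-v) = T v
  map_01 : T (0, 1) = a
  map_11 : T (1, 1) = b
  map_10 : T (1, 0) = c
  add_rule : ∀ v w : ℤ × ℤ, Primitive v → Primitive w →
    (v.1 * w.2 - v.2 * w.1 = 1 ∨ v.1 * w.2 - v.2 * w.1 = -1) →
    T (v + w) = T v * T w - T (v - w)

namespace PMI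

def stepE (b : Bool) (e : (ℤ×ℤ)×(ℤ×ℤ)) : (ℤ×ℤ)×(ℤ×ℤ) :=
  if b then (e.1+e.2, e.2) else (e.1, e.1+e.2)

def edge : List Bool → (ℤ×ℤ)×(ℤ×ℤ)
  | [] => ((0,1),(1,1))
  | b::w => stepE b (edge w)

def nd (w : List Bool) : ℤ×ℤ := (edge w).1 + (edge w).2

@[simp] lemma edge_nil : edge [] = ((0,1),(1,1)) := rfl
@[simp] lemma edge_false (w : List Bool) :
    edge (false::w) = ((edge w).1, (edge w).1 + (edge w).2) := rfl
@[simp] lemma edge_true (w : List Bool) :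
    edge (true::w) = ((edge w).1 + (edge w).2, (edge w).2) := rfl

/-- invariant region -/
def Pp (e : (ℤ×ℤ)×(ℤ×ℤ)) : Prop :=
  0 ≤ e.1.1 ∧ 1 ≤ e.1.2 ∧ 1 ≤ e.2.1 ∧ 1 ≤ e.2.2 ∧ e.1.1 < e.1.2 ∧ e.2.1 ≤ e.2.2 ∧
    e.1.1*e.2.2 - e.1.2*e.2.1 = -1

lemma edge_P (w : List Bool) : Pp (edge w) := by
  induction w with
  | nil => refine ⟨by norm_num, by norm_num, by norm_num, by norm_num, by norm_num,
      by norm_num, by norm_num⟩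
  | cons b w ih =>
    obtain ⟨h1, h2, h3, h4, h5, h6, h7⟩ := ih
    cases b <;>
      simp only [edge_false, edge_true, Pp, Prod.fst_add, Prod.snd_add]
    · exact ⟨h1, h2, by omega, by omega, h5, by omega, by linear_combination h7⟩
    · exact ⟨by omega, by omega, h3, h4, by omega, h6, by linear_combination h7⟩

lemma isCoprime_fst {p q r s : ℤ} (h : p*s - q*r = -1) : IsCoprime p q :=
  ⟨-s, r, by linear_combination -h⟩

lemma isCoprime_snd {p q r s : ℤ} (h : p*s - q*r = -1) : IsCoprime r s :=
  ⟨q, -p, by linear_combination -h⟩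

lemma prim_u (w : List Bool) : Primitive (edge w).1 := isCoprime_fst (edge_P w).2.2.2.2.2.2
lemma prim_v (w : List Bool) : Primitive (edge w).2 := isCoprime_snd (edge_P w).2.2.2.2.2.2

lemma det_u_nd (w : List Bool) :
    (edge w).1.1 * (nd w).2 - (edge w).1.2 * (nd w).1 = -1 := by
  have h := (edge_P w).2.2.2.2.2.2
  simp only [nd, Prod.fst_add, Prod.snd_add]
  linear_combination h

lemma prim_nd (w : List Bool) : Primitive (nd w) := isCoprime_snd (det_u_nd w)

lemma det_vsub (w : List Bool) :
    ((edge w).2 - (edge w).1).1 * (edge w).2.2 - ((edge w).2 - (edge w).1).2 * (edge w).2.1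
      = 1 := by
  have h := (edge_P w).2.2.2.2.2.2
  simp only [Prod.fst_sub, Prod.snd_sub]
  linear_combination -h

lemma prim_vsub (w : List Bool) : Primitive ((edge w).2 - (edge w).1) :=
  ⟨(edge w).2.2, -(edge w).2.1, by linear_combination det_vsub w⟩

lemma edge_inj : Function.Injective edge := by
  intro w w' h
  induction w generalizing w' with
  | nil =>
    cases w' with
    | nil => rfl
    | cons b t =>
      exfalso
      have hP := edge_P t
      cases b <;> simp only [edge_nil, edge_false, edge_true] at h <;>
        [ (have h2 : ((1:ℤ),(1:ℤ)) = (edge t).1 + (edge t).2 := congrArg Prod.snd h;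
           have h1 : ((0:ℤ),(1:ℤ)) = (edge t).1 := congrArg Prod.fst h);
          (have h2 : ((0:ℤ),(1:ℤ)) = (edge t).1 + (edge t).2 := congrArg Prod.fst h;
           have h1 : ((1:ℤ),(1:ℤ)) = (edge t).2 := congrArg Prod.snd h)] <;>
      · obtain ⟨a1, a2, a3, a4, a5, a6, a7⟩ := hP
        rw [Prod.ext_iff] at h1 h2
        simp only [Prod.fst_add, Prod.snd_add] at h1 h2
        omega
  | cons b t ih =>
    cases w' with
    | nil =>
      exfalso
      have hP := edge_P t
      obtain ⟨a1, a2, a3, a4, a5, a6, a7⟩ := hP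
      cases b <;> simp only [edge_nil, edge_false, edge_true] at h <;>
        rw [Prod.ext_iff, Prod.ext_iff, Prod.ext_iff] at h <;>
        simp only [Prod.fst_add, Prod.snd_add] at h <;> omega
    | cons b' t' =>
      have hP := edge_P t
      have hP' := edge_P t'
      obtain ⟨a1, a2, a3, a4, a5, a6, a7⟩ := hP
      obtain ⟨b1, b2, b3, b4, b5, b6, b7⟩ := hP'
      cases b <;> cases b' <;>
        simp only [edge_false, edge_true] at h <;>
        rw [Prod.ext_iff, Prod.ext_iff, Prod.ext_iff] at h <;>
        simp only [Prod.fst_add, Prod.snd_add] at h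
      · have : edge t = edge t' := by
          rw [Prod.ext_iff, Prod.ext_iff, Prod.ext_iff]
          refine ⟨⟨h.1.1, h.1.2⟩, ?_, ?_⟩ <;> omega
        rw [ih this]
      · omega
      · omega
      · have : edge t = edge t' := by
          rw [Prod.ext_iff, Prod.ext_iff, Prod.ext_iff]
          refine ⟨⟨?_, ?_⟩, h.2.1, h.2.2⟩ <;> omega
        rw [ih this]


lemma P_unique {u v u' v' : ℤ×ℤ} (h : Pp (u,v)) (h' : Pp (u',v'))
    (hs : u + v = u' + v') : u = u' ∧ v = v' := by
  obtain ⟨a1, a2, a3, a4, a5, a6, a7⟩ := h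
  obtain ⟨b1, b2, b3, b4, b5, b6, b7⟩ := h'
  simp only at a1 a2 a3 a4 a5 a6 a7 b1 b2 b3 b4 b5 b6 b7
  rw [Prod.ext_iff] at hs
  simp only [Prod.fst_add, Prod.snd_add] at hs
  obtain ⟨hp, hq⟩ := hs
  set p := u.1 + v.1 with hpdef
  set q := u.2 + v.2 with hqdef
  have hd1 : u.1 * q - u.2 * p = -1 := by simp only [hpdef, hqdef]; linear_combination a7
  have hd2 : u'.1 * q - u'.2 * p = -1 := by
    rw [hp, hq]; linear_combination b7
  have hpq : IsCoprime p q := isCoprime_snd hd1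
  have hdvd : p ∣ (u.1 - u'.1) * q := ⟨u.2 - u'.2, by linear_combination hd1 - hd2⟩
  have hdvd2 : p ∣ u.1 - u'.1 := hpq.dvd_of_dvd_mul_right hdvd
  have hp1 : 0 < p := by omega
  have hu1 : u.1 = u'.1 := by
    rcases hdvd2 with ⟨k, hk⟩
    have hb1 : p * k < p := by linarith
    have hb2 : -p < p * k := by linarith
    have hk0 : k = 0 := by
      rcases lt_trichotomy k 0 with h0 | h0 | h0
      · have : p * k ≤ p * (-1) := mul_le_mul_of_nonneg_left (by omega) hp1.le
        linarith
      · exact h0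
      · have : p * 1 ≤ p * k := mul_le_mul_of_nonneg_left (by omega) hp1.le
        linarith
    rw [hk0, mul_zero] at hk
    omega
  have hu2 : u.2 = u'.2 := by
    have h0 : (u.2 - u'.2) * p = 0 := by linear_combination hd2 - hd1 + q * hu1
    have := mul_eq_zero.1 h0
    omega
  refine ⟨Prod.ext hu1 hu2, Prod.ext (by omega) (by omega)⟩

lemma nd_inj : Function.Injective nd := by
  intro w w' h
  have h1 := edge_P w
  have h2 := edge_P w'
  have h3 : (edge w).1 + (edge w).2 = (edge w').1 + (edge w').2 := h
  obtain ⟨e1, e2⟩ := P_unique (by simpa using h1) (by simpa using h2) h3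
  exact edge_inj (Prod.ext e1 e2)

lemma reach : ∀ n (u v : ℤ×ℤ), (u.2 + v.2).toNat ≤ n → Pp (u,v) →
    ∃ w, edge w = (u,v) := by
  intro n
  induction n with
  | zero =>
    intro u v hn hP
    obtain ⟨a1, a2, a3, a4, a5, a6, a7⟩ := hP
    simp only at a1 a2 a3 a4 a5 a6 a7
    omega
  | succ n ih =>
    intro u v hn hP
    obtain ⟨a1, a2, a3, a4, a5, a6, a7⟩ := hP
    simp only at a1 a2 a3 a4 a5 a6 a7
    have hI : (u.2 - u.1) * (v.1 - u.1) = u.1 * ((v.2 - v.1) - (u.2 - u.1)) + 1 := by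
      linear_combination -a7
    rcases lt_trichotomy u.2 v.2 with hlt | heq | hgt
    · -- left child of (u, v - u)
      have hp1 : u.1 < v.1 := by nlinarith
      have hp2 : v.1 - u.1 ≤ v.2 - u.2 := by
        by_contra hcon
        push_neg at hcon
        have e4 : u.1 * ((v.2 - v.1) - (u.2 - u.1)) ≤ 0 :=
          mul_nonpos_of_nonneg_of_nonpos a1 (by omega)
        have e5 : (v.1 - u.1) ≤ (u.2 - u.1) * (v.1 - u.1) :=
          le_mul_of_one_le_left (by omega) (by omega)
        linarith
      obtain ⟨w, hw⟩ := ih u (v - u) (by simp only [Prod.snd_sub]; omega)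
        ⟨a1, a2, by simp only [Prod.fst_sub]; omega, by simp only [Prod.snd_sub]; omega,
          a5, by simp only [Prod.fst_sub, Prod.snd_sub]; omega,
          by simp only [Prod.fst_sub, Prod.snd_sub]; linear_combination a7⟩
      refine ⟨false :: w, ?_⟩
      rw [edge_false, hw]
      refine Prod.ext rfl ?_
      simp only
      abel
    · -- root
      have h1 : u.2 * (v.1 - u.1) = 1 := by linear_combination -a7 - u.1 * heq
      rcases Int.mul_eq_one_iff_eq_one_or_neg_one.1 h1 with ⟨e1, e2⟩ | ⟨e1, e2⟩
      · refine ⟨[], ?_⟩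
        rw [edge_nil]
        have : u.1 = 0 := by omega
        refine Prod.ext (Prod.ext ?_ ?_) (Prod.ext ?_ ?_) <;> simp <;> omega
      · omega
    · -- right child of (u - v, v)
      have hp1 : v.1 ≤ u.1 := by nlinarith
      have hp2 : u.1 - v.1 < u.2 - v.2 := by
        by_contra hcon
        push_neg at hcon
        have e4 : 0 ≤ u.1 * ((v.2 - v.1) - (u.2 - u.1)) :=
          mul_nonneg a1 (by omega)
        have e5 : (u.2 - u.1) * (v.1 - u.1) ≤ 0 :=
          mul_nonpos_of_nonneg_of_nonpos (by omega) (by omega)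
        linarith
      obtain ⟨w, hw⟩ := ih (u - v) v (by simp only [Prod.snd_sub]; omega)
        ⟨by simp only [Prod.fst_sub]; omega, by simp only [Prod.snd_sub]; omega, a3, a4,
          by simp only [Prod.fst_sub, Prod.snd_sub]; omega, a6,
          by simp only [Prod.fst_sub, Prod.snd_sub]; linear_combination a7⟩
      refine ⟨true :: w, ?_⟩
      rw [edge_true, hw]
      refine Prod.ext ?_ rfl
      simp only
      abel

lemma nd_surj (p q : ℤ) (hp : 0 < p) (hpq : p < q) (hco : IsCoprime p q) :
    ∃ w, nd w = (p, q) := by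
  obtain ⟨m, n, hmn⟩ := hco
  set p1 := (-n) % p with hp1def
  have hp1nn : 0 ≤ p1 := Int.emod_nonneg _ (by omega)
  have hp1lt : p1 < p := Int.emod_lt_of_pos _ hp
  have hdvd : p ∣ p1 * q + 1 := by
    have h1 : p1 = -n - p * ((-n) / p) := by rw [hp1def, Int.emod_def]
    refine ⟨m - ((-n) / p) * q, ?_⟩
    rw [h1]
    linear_combination -hmn
  obtain ⟨q1, hq1⟩ := hdvd
  have hdet : p1 * q - q1 * p = -1 := by linear_combination hq1
  have hq1pos : 1 ≤ q1 := by
    by_contra hcon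
    push_neg at hcon
    have t0 : 0 ≤ p1 * q := mul_nonneg hp1nn (by omega)
    have t1 : p * q1 ≤ 0 := mul_nonpos_of_nonneg_of_nonpos hp.le (by omega)
    linarith
  have hp1q1 : p1 < q1 := by
    rcases eq_or_lt_of_le hp1nn with h0 | h0
    · have h2 : q1 * p = 1 := by linear_combination -hdet - q * h0
      rcases Int.mul_eq_one_iff_eq_one_or_neg_one.1 h2 with ⟨e1, e2⟩ | ⟨e1, e2⟩ <;> omega
    · by_contra hcon
      push_neg at hcon
      have t1 : q1 * p ≤ p1 * p := mul_le_mul_of_nonneg_right hcon hp.le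
      have t2 : p1 * p < p1 * q := mul_lt_mul_of_pos_left hpq h0
      linarith
  have hkey : 1 ≤ (p - p1) * (q - p) := by
    have t1 : 1 ≤ p - p1 := by omega
    have t2 : 1 ≤ q - p := by omega
    nlinarith
  have I6 : p * ((q - q1) - (p - p1)) = (p - p1) * (q - p) - 1 := by linear_combination hdet
  have s6 : 0 ≤ (q - q1) - (p - p1) := by
    have h0 : 0 ≤ p * ((q - q1) - (p - p1)) := by rw [I6]; linarith
    by_contra hcon
    push_neg at hcon
    have : p * ((q - q1) - (p - p1)) ≤ p * (-1) := mul_le_mul_of_nonneg_left (by omega) hp.le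
    linarith
  obtain ⟨w, hw⟩ := reach (q.toNat) (p1, q1) (p - p1, q - q1)
    (by simp only; omega)
    ⟨hp1nn, show (1:ℤ) ≤ q1 by omega, show (1:ℤ) ≤ p - p1 by omega,
      show (1:ℤ) ≤ q - q1 by omega, hp1q1,
      show p - p1 ≤ q - q1 by omega, show p1*(q-q1) - q1*(p-p1) = -1 by linear_combination hdet⟩
  refine ⟨w, ?_⟩
  rw [nd, hw]
  refine Prod.ext ?_ ?_ <;> simp only [Prod.fst_add, Prod.snd_add] <;> omega


/-! ### Real side -/

noncomputable def Fg (t : ℝ) : ℝ := 1 - Real.sqrt (1 - 4 / t ^ 2)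

lemma Fg_pos {t : ℝ} (ht : 2 < t) : 0 < Fg t := by
  have h1 : Real.sqrt (1 - 4 / t ^ 2) < Real.sqrt 1 := by
    apply Real.sqrt_lt_sqrt
    · have : (0:ℝ) < t ^ 2 := by positivity
      have h4 : 4 / t ^ 2 ≤ 1 := by
        rw [div_le_one this]; nlinarith
      linarith
    · have : (0:ℝ) < 4 / t ^ 2 := by positivity
      linarith
  rw [Real.sqrt_one] at h1
  simp only [Fg]
  linarith

lemma Fg_anti {s t : ℝ} (hs : 2 < s) (hst : s ≤ t) : Fg t ≤ Fg s := by
  simp only [Fg]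
  have h1 : Real.sqrt (1 - 4 / s ^ 2) ≤ Real.sqrt (1 - 4 / t ^ 2) := by
    apply Real.sqrt_le_sqrt
    have hs0 : (0:ℝ) < s ^ 2 := by nlinarith
    have ht0 : (0:ℝ) < t ^ 2 := by nlinarith
    have : 4 / t ^ 2 ≤ 4 / s ^ 2 := by
      apply div_le_div_of_nonneg_left (by norm_num) hs0
      nlinarith
    linarith
  linarith

lemma Fg_lower {t : ℝ} (ht : 2 < t) : 2 / t ^ 2 ≤ Fg t := by
  have h0 : (0:ℝ) < t ^ 2 := by positivity
  have h1 : Real.sqrt (1 - 4 / t ^ 2) ≤ 1 - 2 / t ^ 2 := by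
    rw [show (1:ℝ) - 4 / t ^ 2 = (1 - 2 / t^2)^2 - 4/t^4 + (4/t^2 - 4/t^2) by
      field_simp; ring]
    have h2 : (0:ℝ) ≤ 1 - 2 / t ^ 2 := by
      rw [sub_nonneg, div_le_one h0]; nlinarith
    calc Real.sqrt ((1 - 2 / t^2)^2 - 4/t^4 + (4/t^2 - 4/t^2))
        ≤ Real.sqrt ((1 - 2 / t^2)^2) := by
          apply Real.sqrt_le_sqrt
          have : (0:ℝ) < 4 / t^4 := by positivity
          linarith
      _ = 1 - 2 / t^2 := by rw [Real.sqrt_sq h2]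
  simp only [Fg]
  linarith

lemma Fg_sqrt {t : ℝ} (ht : 2 < t) :
    Real.sqrt (1 - 4 / t ^ 2) = Real.sqrt (t ^ 2 - 4) / t := by
  have h0 : (0:ℝ) < t := by linarith
  rw [show (1:ℝ) - 4 / t ^ 2 = (t ^ 2 - 4) / t ^ 2 by field_simp,
    Real.sqrt_div (by nlinarith : (0:ℝ) ≤ t ^ 2 - 4), Real.sqrt_sq h0.le]

/-- key positivity inequality: `2z ≤ y√(x²-4) + x√(y²-4)` for a Markoff triple -/
lemma two_z_le {x y z : ℝ} (hx : 2 < x) (hy : 2 < y) (hz : 2 < z)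
    (hM : x^2 + y^2 + z^2 = x*y*z) :
    2*z ≤ y * Real.sqrt (x^2-4) + x * Real.sqrt (y^2-4) := by
  obtain ⟨s, hs⟩ : ∃ s', s' = Real.sqrt (x^2-4) := ⟨_, rfl⟩
  obtain ⟨t, ht⟩ : ∃ t', t' = Real.sqrt (y^2-4) := ⟨_, rfl⟩
  obtain ⟨D, hD⟩ : ∃ D', D' = x^2*y^2 - 4*x^2 - 4*y^2 := ⟨_, rfl⟩
  obtain ⟨r, hr⟩ : ∃ r', r' = Real.sqrt D := ⟨_, rfl⟩
  rw [← hs, ← ht]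
  have hx0 : (0:ℝ) < x := by linarith
  have hy0 : (0:ℝ) < y := by linarith
  have hs0 : 0 ≤ s := hs ▸ Real.sqrt_nonneg _
  have ht0 : 0 ≤ t := ht ▸ Real.sqrt_nonneg _
  have hr0 : 0 ≤ r := hr ▸ Real.sqrt_nonneg _
  have hs2 : s^2 = x^2-4 := by rw [hs]; exact Real.sq_sqrt (by nlinarith)
  have ht2 : t^2 = y^2-4 := by rw [ht]; exact Real.sq_sqrt (by nlinarith)
  have hDval : (2*z - x*y)^2 = D := by rw [hD]; linear_combination 4*hM
  have hDnn : 0 ≤ D := hDval ▸ sq_nonneg _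
  have hr2 : r^2 = D := by rw [hr]; exact Real.sq_sqrt hDnn
  have h1 : 2*z - x*y ≤ r := by
    rw [hr, ← hDval, Real.sqrt_sq_eq_abs]
    exact le_abs_self _
  have hst2 : (s*t)^2 = D + 16 := by rw [mul_pow, hs2, ht2, hD]; ring
  have hstnn : 0 ≤ s * t := mul_nonneg hs0 ht0
  have hstD : r ≤ s*t := by
    have h := Real.sqrt_le_sqrt (show r^2 ≤ (s*t)^2 by rw [hr2, hst2]; linarith)
    rwa [Real.sqrt_sq hr0, Real.sqrt_sq hstnn] at h
  have hkey : (x*y + r)^2 ≤ (y*s + x*t)^2 := by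
    nlinarith [mul_le_mul_of_nonneg_left hstD
      (by positivity : (0:ℝ) ≤ 2*(x*y))]
  have hnn1 : 0 ≤ x*y + r := by nlinarith
  have hnn2 : 0 ≤ y*s + x*t :=
    add_nonneg (mul_nonneg hy0.le hs0) (mul_nonneg hx0.le ht0)
  have h2 : x*y + r ≤ y*s + x*t := by nlinarith
  linarith

/-- the `E` quantity in closed form -/
lemma E_form {x y z : ℝ} (hx : 2 < x) (hy : 2 < y) :
    1 - z/(x*y) - Fg x/2 - Fg y/2
      = (y * Real.sqrt (x^2-4) + x * Real.sqrt (y^2-4) - 2*z) / (2*(x*y)) := by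
  have hx0 : (0:ℝ) < x := by linarith
  have hy0 : (0:ℝ) < y := by linarith
  simp only [Fg, Fg_sqrt hx, Fg_sqrt hy]
  field_simp
  ring

lemma E_nonneg {x y z : ℝ} (hx : 2 < x) (hy : 2 < y) (hz : 2 < z)
    (hM : x^2 + y^2 + z^2 = x*y*z) :
    0 ≤ 1 - z/(x*y) - Fg x/2 - Fg y/2 := by
  rw [E_form hx hy]
  have := two_z_le hx hy hz hM
  have hx0 : (0:ℝ) < x := by linarith
  have hy0 : (0:ℝ) < y := by linarith
  apply div_nonneg (by linarith) (by positivity)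

set_option maxHeartbeats 2000000 in
/-- comparison: when `z` is the larger root, `E ≤ C(τ) · Fg z`. -/
lemma E_le {τ x y z : ℝ} (hτ : 2 < τ) (hx : τ ≤ x) (hy : τ ≤ y) (hz : 2 < z)
    (hM : x^2 + y^2 + z^2 = x*y*z) (hroot : x*y ≤ 2*z) :
    1 - z/(x*y) - Fg x/2 - Fg y/2 ≤ (4*τ^2/(τ^2-4)) * Fg z := by
  have hx2 : 2 < x := lt_of_lt_of_le hτ hx
  have hy2 : 2 < y := lt_of_lt_of_le hτ hy
  have hx0 : (0:ℝ) < x := by linarith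
  have hy0 : (0:ℝ) < y := by linarith
  have hz0 : (0:ℝ) < z := by linarith
  rw [E_form hx2 hy2]
  obtain ⟨s, hs⟩ : ∃ s', s' = Real.sqrt (x^2-4) := ⟨_, rfl⟩
  obtain ⟨t, ht⟩ : ∃ t', t' = Real.sqrt (y^2-4) := ⟨_, rfl⟩
  obtain ⟨D, hD⟩ : ∃ D', D' = x^2*y^2 - 4*x^2 - 4*y^2 := ⟨_, rfl⟩
  obtain ⟨r, hr⟩ : ∃ r', r' = Real.sqrt D := ⟨_, rfl⟩
  rw [← hs, ← ht]
  have hs0 : 0 ≤ s := hs ▸ Real.sqrt_nonneg _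
  have ht0 : 0 ≤ t := ht ▸ Real.sqrt_nonneg _
  have hr0 : 0 ≤ r := hr ▸ Real.sqrt_nonneg _
  have hs2 : s^2 = x^2-4 := by rw [hs]; exact Real.sq_sqrt (by nlinarith)
  have ht2 : t^2 = y^2-4 := by rw [ht]; exact Real.sq_sqrt (by nlinarith)
  have hDval : (2*z - x*y)^2 = D := by rw [hD]; linear_combination 4*hM
  have hDnn : 0 ≤ D := hDval ▸ sq_nonneg _
  have hr2 : r^2 = D := by rw [hr]; exact Real.sq_sqrt hDnn
  have hsx : s ≤ x := by
    have h := Real.sqrt_le_sqrt (show s^2 ≤ x^2 by rw [hs2]; linarith)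
    rwa [Real.sqrt_sq hs0, Real.sqrt_sq hx0.le] at h
  have hty : t ≤ y := by
    have h := Real.sqrt_le_sqrt (show t^2 ≤ y^2 by rw [ht2]; linarith)
    rwa [Real.sqrt_sq ht0, Real.sqrt_sq hy0.le] at h
  have hsqD : r = 2*z - x*y := by
    rw [hr, ← hDval, Real.sqrt_sq (by linarith)]
  have hst2 : (s*t)^2 = D + 16 := by rw [mul_pow, hs2, ht2, hD]; ring
  have hstnn : 0 ≤ s * t := mul_nonneg hs0 ht0
  have hstD : r ≤ s*t := by
    have h := Real.sqrt_le_sqrt (show r^2 ≤ (s*t)^2 by rw [hr2, hst2]; linarith)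
    rwa [Real.sqrt_sq hr0, Real.sqrt_sq hstnn] at h
  -- numerator bound : st * N ≤ 16 where N = ys + xt - 2z
  have hN1 : y*s + x*t ≤ x*y + s*t := by
    nlinarith [mul_nonneg (sub_nonneg.2 hsx) (sub_nonneg.2 hty)]
  have hstpos : 0 < s*t := by nlinarith
  have hNbound : s*t * (y*s + x*t - 2*z) ≤ 16 := by
    have h1 : y*s + x*t - 2*z ≤ s*t - r := by rw [hsqD]; linarith
    have h2 : s*t * (y*s + x*t - 2*z) ≤ s*t * (s*t - r) :=
      mul_le_mul_of_nonneg_left h1 hstpos.le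
    have h4 : D ≤ s*t*r := by
      calc D = r * r := by linear_combination -hr2
        _ ≤ s*t*r := mul_le_mul_of_nonneg_right hstD hr0
    have h5 : s*t*(s*t - r) = D + 16 - s*t*r := by linear_combination hst2
    linarith [h2, h4, h5]
  -- st lower bound, fraction-free
  have hτ0 : (0:ℝ) < τ^2 - 4 := by nlinarith
  have hslow : (τ^2-4)*(x*y) ≤ τ^2*(s*t) := by
    have hs' : (τ^2-4)*x^2 ≤ τ^2*s^2 := by rw [hs2]; nlinarith
    have ht' : (τ^2-4)*y^2 ≤ τ^2*t^2 := by rw [ht2]; nlinarith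
    have hmm := mul_le_mul hs' ht' (by nlinarith : (0:ℝ) ≤ (τ^2-4)*y^2)
        (mul_nonneg (sq_nonneg τ) (by rw [hs2]; nlinarith))
    have hsq : ((τ^2-4)*(x*y))^2 ≤ (τ^2*(s*t))^2 := by
      calc ((τ^2-4)*(x*y))^2 = (τ^2-4)*x^2 * ((τ^2-4)*y^2) := by ring
        _ ≤ τ^2*s^2 * (τ^2*t^2) := hmm
        _ = (τ^2*(s*t))^2 := by ring
    have hA0 : 0 ≤ (τ^2-4)*(x*y) := mul_nonneg hτ0.le (mul_pos hx0 hy0).le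
    have hB0 : 0 ≤ τ^2*(s*t) := mul_nonneg (sq_nonneg τ) hstnn
    have h := Real.sqrt_le_sqrt hsq
    rwa [Real.sqrt_sq hA0, Real.sqrt_sq hB0] at h
  -- conclude
  have hzxy : z ≤ x*y := by nlinarith
  have hFg : 2/(x*y)^2 ≤ Fg z := by
    calc 2/(x*y)^2 ≤ 2/z^2 := by
          apply div_le_div_of_nonneg_left (by norm_num) (by positivity)
          nlinarith
      _ ≤ Fg z := Fg_lower hz
  have hN0 : 0 ≤ y*s + x*t - 2*z := by
    have h2z := two_z_le hx2 hy2 hz hM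
    rw [← hs, ← ht] at h2z
    linarith
  have step1 : (y*s + x*t - 2*z)/(2*(x*y)) ≤ 8*τ^2/((τ^2-4)*(x*y)^2) := by
    rw [div_le_div_iff₀ (by positivity) (by positivity)]
    have c1 : (y*s + x*t - 2*z)*((τ^2-4)*(x*y)) ≤ (y*s + x*t - 2*z)*(τ^2*(s*t)) :=
      mul_le_mul_of_nonneg_left hslow hN0
    have c2 : (y*s + x*t - 2*z)*(τ^2*(s*t)) ≤ 16*τ^2 := by
      calc (y*s + x*t - 2*z)*(τ^2*(s*t)) = τ^2*(s*t*(y*s + x*t - 2*z)) := by ring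
        _ ≤ τ^2*16 := mul_le_mul_of_nonneg_left hNbound (sq_nonneg τ)
        _ = 16*τ^2 := by ring
    calc (y*s + x*t - 2*z)*((τ^2-4)*(x*y)^2)
        = ((y*s + x*t - 2*z)*((τ^2-4)*(x*y)))*(x*y) := by ring
      _ ≤ 16*τ^2*(x*y) := mul_le_mul_of_nonneg_right (c1.trans c2) (mul_pos hx0 hy0).le
      _ = 8*τ^2*(2*(x*y)) := by ring
  have step2 : 8*τ^2/((τ^2-4)*(x*y)^2) = 4*τ^2/(τ^2-4) * (2/(x*y)^2) := by
    field_simp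
    ring
  have step3 : 4*τ^2/(τ^2-4) * (2/(x*y)^2) ≤ 4*τ^2/(τ^2-4) * Fg z := by
    apply mul_le_mul_of_nonneg_left hFg
    positivity
  calc (y*s + x*t - 2*z)/(2*(x*y)) ≤ 8*τ^2/((τ^2-4)*(x*y)^2) := step1
    _ = 4*τ^2/(τ^2-4) * (2/(x*y)^2) := step2
    _ ≤ 4*τ^2/(τ^2-4) * Fg z := step3


/-! ### Traces along the tree -/

section Traces

variable {a b c : ℝ} {T : ℤ × ℤ → ℝ}

/-- trace of the first endpoint -/
noncomputable def Xr (T : ℤ × ℤ → ℝ) (w : List Bool) : ℝ := T (edge w).1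
/-- trace of the second endpoint -/
noncomputable def Yr (T : ℤ × ℤ → ℝ) (w : List Bool) : ℝ := T (edge w).2
/-- trace of the mediant -/
noncomputable def Zr (T : ℤ × ℤ → ℝ) (w : List Bool) : ℝ := T (nd w)
/-- trace of the far vertex -/
noncomputable def Wr (T : ℤ × ℤ → ℝ) (w : List Bool) : ℝ := T ((edge w).2 - (edge w).1)

lemma Zr_eq (hT : IsTraceFunction a b c T) (w : List Bool) :
    Zr T w = Xr T w * Yr T w - Wr T w := by
  have h := hT.add_rule (edge w).1 (edge w).2 (prim_u w) (prim_v w)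
    (Or.inr (edge_P w).2.2.2.2.2.2)
  have h2 : (edge w).1 - (edge w).2 = -((edge w).2 - (edge w).1) := by abel
  rw [h2, hT.neg_eq _ (prim_vsub w)] at h
  exact h

@[simp] lemma Xr_false (w : List Bool) : Xr T (false :: w) = Xr T w := rfl
@[simp] lemma Yr_false (w : List Bool) : Yr T (false :: w) = Zr T w := rfl
@[simp] lemma Xr_true (w : List Bool) : Xr T (true :: w) = Zr T w := rfl
@[simp] lemma Yr_true (w : List Bool) : Yr T (true :: w) = Yr T w := rfl

lemma Wr_false (w : List Bool) : Wr T (false :: w) = Yr T w := by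
  simp only [Wr, Yr, edge_false]
  congr 1
  abel

lemma Wr_true (hT : IsTraceFunction a b c T) (w : List Bool) :
    Wr T (true :: w) = Xr T w := by
  simp only [Wr, Xr, edge_true]
  have h2 : (edge w).2 - ((edge w).1 + (edge w).2) = -((edge w).1) := by abel
  rw [h2, hT.neg_eq _ (prim_u w)]

lemma Zr_false (hT : IsTraceFunction a b c T) (w : List Bool) :
    Zr T (false :: w) = Xr T w * Zr T w - Yr T w := by
  rw [Zr_eq hT, Xr_false, Yr_false, Wr_false]

lemma Zr_true (hT : IsTraceFunction a b c T) (w : List Bool) :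
    Zr T (true :: w) = Zr T w * Yr T w - Xr T w := by
  rw [Zr_eq hT, Xr_true, Yr_true, Wr_true hT]

lemma Xr_nil : Xr T [] = T (0,1) := rfl
lemma Yr_nil : Yr T [] = T (1,1) := rfl

lemma Wr_nil (hT : IsTraceFunction a b c T) : Wr T [] = c := by
  have : ((1:ℤ),(1:ℤ)) - ((0:ℤ),(1:ℤ)) = ((1:ℤ),(0:ℤ)) := by
    simp [Prod.ext_iff]
  simp only [Wr, edge_nil, this, hT.map_10]

/-- `2 < z` from a Markoff relation with far vertex `> 2`. -/
lemma gt2 {x y z zf : ℝ} (hx : 2 < x) (hy : 2 < y) (hzf : 2 < zf)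
    (hsum : z + zf = x*y) (hM : x^2 + y^2 + z^2 = x*y*z) : 2 < z := by
  have key : (z - 2)*(zf - 2) = (x - y)^2 + 4 := by
    have hzf' : zf = x*y - z := by linarith
    rw [hzf']
    linear_combination -hM
  nlinarith [sq_nonneg (x - y)]

/-- master invariant along the tree -/
lemma master (ha : 2 < a) (hb : 2 < b) (hc : 2 < c)
    (habc : a ^ 2 + b ^ 2 + c ^ 2 = a * b * c) (hT : IsTraceFunction a b c T)
    (w : List Bool) :
    2 < Xr T w ∧ 2 < Yr T w ∧ 2 < Wr T w ∧ 2 < Zr T w ∧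
      (Xr T w)^2 + (Yr T w)^2 + (Zr T w)^2 = Xr T w * Yr T w * Zr T w := by
  induction w with
  | nil =>
    have hX : Xr T [] = a := by rw [Xr_nil, hT.map_01]
    have hY : Yr T [] = b := by rw [Yr_nil, hT.map_11]
    have hW : Wr T [] = c := Wr_nil hT
    have hZ : Zr T [] = a*b - c := by
      rw [Zr_eq hT, hX, hY, hW]
    have hM : (Xr T [])^2 + (Yr T [])^2 + (Zr T [])^2 = Xr T [] * Yr T [] * Zr T [] := by
      rw [hX, hY, hZ]; linear_combination habc
    refine ⟨hX ▸ ha, hY ▸ hb, hW ▸ hc, ?_, hM⟩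
    exact gt2 (hX ▸ ha) (hY ▸ hb) (hW ▸ hc) (by rw [hZ, hX, hY, hW]; ring) hM
  | cons b' w ih =>
    obtain ⟨hx, hy, hw, hz, hM⟩ := ih
    cases b'
    · have hZf : Zr T (false :: w) = Xr T w * Zr T w - Yr T w := Zr_false hT w
      have hM2 : (Xr T w)^2 + (Zr T w)^2 + (Zr T (false::w))^2
          = Xr T w * Zr T w * Zr T (false::w) := by
        rw [hZf]; linear_combination hM
      exact ⟨hx, hz, by rwa [Wr_false],
        gt2 hx hz hy (by rw [hZf]; ring) hM2, hM2⟩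
    · have hZf : Zr T (true :: w) = Zr T w * Yr T w - Xr T w := Zr_true hT w
      have hM2 : (Zr T w)^2 + (Yr T w)^2 + (Zr T (true::w))^2
          = Zr T w * Yr T w * Zr T (true::w) := by
        rw [hZf]; linear_combination hM
      exact ⟨hz, hy, by rwa [Wr_true hT],
        gt2 hz hy hx (by rw [hZf]; ring) hM2, hM2⟩

end Traces



section Sums

variable {a b c : ℝ} {T : ℤ × ℤ → ℝ}

/-- the edge weight -/
noncomputable def Er (T : ℤ × ℤ → ℝ) (w : List Bool) : ℝ :=
  1 - Zr T w/(Xr T w * Yr T w) - Fg (Xr T w)/2 - Fg (Yr T w)/2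

/-- the node weight (the summand) -/
noncomputable def gr (T : ℤ × ℤ → ℝ) (w : List Bool) : ℝ := Fg (Zr T w)

/-- pure telescoping identity -/
lemma tele {x y z Fx Fy Fz : ℝ} (hx : 0 < x) (hy : 0 < y) (hz : 0 < z)
    (hM : x^2 + y^2 + z^2 = x*y*z) :
    1 - z/(x*y) - Fx/2 - Fy/2
      = Fz + (1 - (x*z - y)/(x*z) - Fx/2 - Fz/2)
          + (1 - (z*y - x)/(z*y) - Fz/2 - Fy/2) := by
  have key : (1 : ℝ) - z/(x*y) = y/(x*z) + x/(z*y) := by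
    field_simp
    linear_combination -hM
  rw [show (x*z - y)/(x*z) = 1 - y/(x*z) by field_simp,
    show (z*y - x)/(z*y) = 1 - x/(z*y) by field_simp]
  linarith [key]


lemma smallz_core {τ x y z : ℝ} (hτ : 2 < τ) (hx : τ ≤ x) (hy : τ ≤ y) (hz : 2 < z)
    (hM : x^2+y^2+z^2 = x*y*z) (hzx : x ≤ z) (hzy : y ≤ z) (h2z : 2*z < x*y) :
    z ≤ 4 + 8/(τ - 2) := by
  have hx2 : 2 < x := lt_of_lt_of_le hτ hx
  have hy2 : 2 < y := lt_of_lt_of_le hτ hy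
  have hx0 : (0:ℝ) < x := by linarith
  have hy0 : (0:ℝ) < y := by linarith
  have hz0 : (0:ℝ) < z := by linarith
  have hzz : z * (x*y - z) = x^2 + y^2 := by linear_combination -hM
  have hzp : z < x*y - z := by linarith
  have hz2 : z^2 < x^2 + y^2 := by
    calc z^2 = z*z := sq z
      _ < z*(x*y - z) := mul_lt_mul_of_pos_left hzp hz0
      _ = x^2 + y^2 := hzz
  have hA : 0 ≤ x*(z - x) := mul_nonneg hx0.le (by linarith)
  have hB : 0 ≤ y*(z - y) := mul_nonneg hy0.le (by linarith)
  have hzxy2 : z < x + y := by nlinarith [hz2, hA, hB, hz0, mul_pos hz0 hz0]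
  have hzfar : x*y - z ≤ x + y := by nlinarith [hzz, hA, hB, hz0]
  have hxy : x*y < 2*x + 2*y := by linarith
  have hyb : y - 2 < 4/(τ-2) := by
    rw [lt_div_iff₀ (by linarith : (0:ℝ) < τ - 2)]
    nlinarith
  have hxb : x - 2 < 4/(τ-2) := by
    rw [lt_div_iff₀ (by linarith : (0:ℝ) < τ - 2)]
    nlinarith
  have h8 : (8:ℝ)/(τ-2) = 4/(τ-2) + 4/(τ-2) := by ring
  linarith

/-- level sums -/
noncomputable def Bn (T : ℤ × ℤ → ℝ) (n : ℕ) : ℝ := ∑ f : Fin n → Bool, Er T (List.ofFn f)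
noncomputable def Gn (T : ℤ × ℤ → ℝ) (n : ℕ) : ℝ := ∑ f : Fin n → Bool, gr T (List.ofFn f)

lemma ofFn_cons {n : ℕ} (b' : Bool) (f : Fin n → Bool) :
    List.ofFn (Fin.cons b' f) = b' :: List.ofFn f := by
  simp [List.ofFn_succ]

section WithHyps

variable (ha : 2 < a) (hb : 2 < b) (hc : 2 < c)
  (habc : a ^ 2 + b ^ 2 + c ^ 2 = a * b * c) (hT : IsTraceFunction a b c T)

include ha hb hc habc hT

lemma Er_tele (w : List Bool) :
    Er T w = gr T w + Er T (false::w) + Er T (true::w) := by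
  obtain ⟨hx, hy, hw', hz, hM⟩ := master ha hb hc habc hT w
  simp only [Er, gr, Xr_false, Yr_false, Xr_true, Yr_true, Zr_false hT, Zr_true hT]
  exact tele (by linarith) (by linarith) (by linarith) hM

lemma Er_nonneg (w : List Bool) : 0 ≤ Er T w := by
  obtain ⟨hx, hy, _, hz, hM⟩ := master ha hb hc habc hT w
  exact E_nonneg hx hy hz hM

lemma gr_pos (w : List Bool) : 0 < gr T w :=
  Fg_pos (master ha hb hc habc hT w).2.2.2.1

lemma Er_nil_eq : Er T [] = c/(a*b) - Fg a/2 - Fg b/2 := by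
  have hX : Xr T [] = a := by rw [Xr_nil, hT.map_01]
  have hY : Yr T [] = b := by rw [Yr_nil, hT.map_11]
  have hZ : Zr T [] = a*b - c := by rw [Zr_eq hT, hX, hY, Wr_nil hT]
  rw [Er, hX, hY, hZ]
  have h1 : (1:ℝ) - (a*b - c)/(a*b) = c/(a*b) := by
    have : a*b ≠ 0 := by positivity
    field_simp
    ring
  linarith

lemma Bn_succ (n : ℕ) : Bn T (n+1) = Bn T n - Gn T n := by
  have h1 : Bn T (n+1) = ∑ p : Bool × (Fin n → Bool), Er T (List.ofFn (Fin.cons p.1 p.2)) := by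
    rw [Bn]
    exact (Fintype.sum_equiv (Fin.consEquiv fun _ => Bool)
      (fun p => Er T (List.ofFn (Fin.cons p.1 p.2)))
      (fun f => Er T (List.ofFn f)) (fun p => rfl)).symm
  rw [h1]
  have h2 : ∀ p : Bool × (Fin n → Bool), Er T (List.ofFn (Fin.cons p.1 p.2))
      = Er T (p.1 :: List.ofFn p.2) := fun p => by rw [ofFn_cons]
  simp only [h2]
  rw [Fintype.sum_prod_type, Fintype.sum_bool, ← Finset.sum_add_distrib,
    Bn, Gn, ← Finset.sum_sub_distrib]
  apply Finset.sum_congr rfl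
  intro f _
  have := Er_tele ha hb hc habc hT (List.ofFn f)
  linarith

lemma Sn_id (n : ℕ) : Bn T n + ∑ k ∈ Finset.range n, Gn T k = Er T [] := by
  induction n with
  | zero =>
    simp only [Finset.range_zero, Finset.sum_empty, add_zero, Bn]
    simp [List.ofFn_zero]
  | succ n ih =>
    rw [Finset.sum_range_succ, Bn_succ ha hb hc habc hT n]
    linarith

end WithHyps

/-- the set of lists of length `n` as a finset -/
def Lev (n : ℕ) : Finset (List Bool) :=
  Finset.univ.image (fun f : Fin n → Bool => List.ofFn f)

lemma mem_Lev {w : List Bool} {n : ℕ} : w ∈ Lev n ↔ w.length = n := by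
  constructor
  · intro h
    obtain ⟨f, _, rfl⟩ := Finset.mem_image.1 h
    simp
  · intro h
    subst h
    exact Finset.mem_image.2 ⟨fun i => w.get i, Finset.mem_univ _, List.ofFn_get w⟩

lemma sum_Lev (F : List Bool → ℝ) (n : ℕ) :
    ∑ w ∈ Lev n, F w = ∑ f : Fin n → Bool, F (List.ofFn f) :=
  Finset.sum_image (fun f _ g _ h => List.ofFn_injective h)

/-- lists of length `< n` -/
def Un (n : ℕ) : Finset (List Bool) := (Finset.range n).biUnion Lev

lemma sum_Un (F : List Bool → ℝ) (n : ℕ) :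
    ∑ w ∈ Un n, F w = ∑ k ∈ Finset.range n, ∑ w ∈ Lev k, F w := by
  apply Finset.sum_biUnion
  intro k _ k' _ hkk'
  simp only [Function.onFun]
  rw [Finset.disjoint_left]
  intro w hw hw'
  exact hkk' ((mem_Lev.1 hw).symm.trans (mem_Lev.1 hw'))

section WithHyps2

variable {a b c : ℝ} {T : ℤ × ℤ → ℝ}
variable (ha : 2 < a) (hb : 2 < b) (hc : 2 < c)
  (habc : a ^ 2 + b ^ 2 + c ^ 2 = a * b * c) (hT : IsTraceFunction a b c T)

include ha hb hc habc hT

lemma Bn_nonneg (n : ℕ) : 0 ≤ Bn T n :=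
  Finset.sum_nonneg fun f _ => Er_nonneg ha hb hc habc hT _

lemma Gn_nonneg (n : ℕ) : 0 ≤ Gn T n :=
  Finset.sum_nonneg fun f _ => (gr_pos ha hb hc habc hT _).le

lemma sum_range_Gn_le (n : ℕ) : ∑ k ∈ Finset.range n, Gn T k ≤ Er T [] := by
  have h1 := Sn_id ha hb hc habc hT n
  have h2 := Bn_nonneg ha hb hc habc hT n
  linarith

lemma sum_g_le (s : Finset (List Bool)) : ∑ w ∈ s, gr T w ≤ Er T [] := by
  set n := (s.sup List.length) + 1 with hn
  have hsub : s ⊆ Un n := by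
    intro w hw
    apply Finset.mem_biUnion.2
    refine ⟨w.length, Finset.mem_range.2 ?_, mem_Lev.2 rfl⟩
    have := Finset.le_sup (f := List.length) hw
    omega
  calc ∑ w ∈ s, gr T w ≤ ∑ w ∈ Un n, gr T w :=
        Finset.sum_le_sum_of_subset_of_nonneg hsub
          (fun w _ _ => (gr_pos ha hb hc habc hT w).le)
    _ = ∑ k ∈ Finset.range n, ∑ w ∈ Lev k, gr T w := sum_Un _ n
    _ = ∑ k ∈ Finset.range n, Gn T k := by
        apply Finset.sum_congr rfl
        intro k _
        rw [sum_Lev, Gn]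
    _ ≤ Er T [] := sum_range_Gn_le ha hb hc habc hT n

lemma finite_small (K : ℝ) (hK : 2 < K) : {w : List Bool | Zr T w ≤ K}.Finite := by
  by_contra hinf
  obtain ⟨t, hts, htc⟩ :=
    Set.Infinite.exists_subset_card_eq hinf (⌈Er T [] / Fg K⌉₊ + 1)
  have hFK : 0 < Fg K := Fg_pos hK
  have hge : ∀ w ∈ t, Fg K ≤ gr T w := fun w hw =>
    Fg_anti (master ha hb hc habc hT w).2.2.2.1 (hts hw)
  have h1 := Finset.card_nsmul_le_sum t (gr T) (Fg K) hge
  have h2 := sum_g_le ha hb hc habc hT t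
  rw [htc, nsmul_eq_mul] at h1
  have h3 : Er T [] / Fg K ≤ (⌈Er T [] / Fg K⌉₊ : ℝ) := Nat.le_ceil _
  rw [div_le_iff₀ hFK] at h3
  push_cast at h1
  nlinarith

/-- a "bad" (descending) edge -/
def BadE (T : ℤ × ℤ → ℝ) (w : List Bool) : Prop :=
  Zr T w < max (Xr T w) (Yr T w)

lemma not_bad_child (w : List Bool) (h : ¬ BadE T w) (b' : Bool) : ¬ BadE T (b'::w) := by
  obtain ⟨hx, hy, hw', hz, hM⟩ := master ha hb hc habc hT w
  rw [BadE, not_lt, max_le_iff] at h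
  rw [BadE, not_lt]
  cases b'
  · simp only [Xr_false, Yr_false, Zr_false hT]
    exact max_le (by nlinarith [h.1, h.2]) (by nlinarith [h.1, h.2])
  · simp only [Xr_true, Yr_true, Zr_true hT]
    exact max_le (by nlinarith [h.1, h.2]) (by nlinarith [h.1, h.2])

lemma bad_parent {w : List Bool} {b' : Bool} (h : BadE T (b'::w)) : BadE T w := by
  by_contra hcon
  exact not_bad_child ha hb hc habc hT w hcon b' h

lemma bad_bound : ∀ w : List Bool, BadE T w → max (Xr T w) (Yr T w) ≤ max a b := by
  intro w
  induction w with
  | nil =>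
    intro _
    have hX : Xr T [] = a := by rw [Xr_nil, hT.map_01]
    have hY : Yr T [] = b := by rw [Yr_nil, hT.map_11]
    rw [hX, hY]
  | cons b' w ih =>
    intro hbad
    have hbw := bad_parent ha hb hc habc hT hbad
    have h1 := ih hbw
    have h2 : Zr T w ≤ max a b := le_trans (le_of_lt (lt_of_lt_of_le hbw h1))
      (le_refl _)
    rw [max_le_iff] at h1
    cases b'
    · simp only [Xr_false, Yr_false]
      exact max_le h1.1 h2
    · simp only [Xr_true, Yr_true]
      exact max_le h2 h1.2

lemma bad_drop : ∀ (w : List Bool) (k : ℕ), BadE T w → BadE T (w.drop k) := by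
  intro w
  induction w with
  | nil => intro k h; simpa using h
  | cons b' w ih =>
    intro k h
    cases k with
    | zero => simpa using h
    | succ k =>
      rw [List.drop_succ_cons]
      exact ih k (bad_parent ha hb hc habc hT h)

end WithHyps2

end Sums

end PMI


open PMI

set_option maxHeartbeats 1000000 in
/-- For a Markoff triple of reals `(a,b,c)` with trace function `T`, the sum over all
coprime pairs `(p,q)` with `0 < p < q` of `1 − √(1 − 4/T(p,q)²)` converges to
`c/(ab) − (1−√(1−4/a²))/2 − (1−√(1−4/b²))/2`. -/
theorem partial_mcshane_identity (a b c : ℝ) (ha : 2 < a) (hb : 2 < b) (hc : 2 < c)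
    (habc : a ^ 2 + b ^ 2 + c ^ 2 = a * b * c)
    (T : ℤ × ℤ → ℝ) (hT : IsTraceFunction a b c T) :
    HasSum
      (fun v : {v : ℤ × ℤ // 0 < v.1 ∧ v.1 < v.2 ∧ IsCoprime v.1 v.2} =>
        1 - Real.sqrt (1 - 4 / T v.val ^ 2))
      (c / (a * b) - (1 - Real.sqrt (1 - 4 / a ^ 2)) / 2
        - (1 - Real.sqrt (1 - 4 / b ^ 2)) / 2) := by
  classical
  have hmaster := fun w => PMI.master ha hb hc habc hT w
  -- the minimum trace τ
  have hfin3 : {w : List Bool | Zr T w ≤ 3}.Finite :=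
    finite_small ha hb hc habc hT 3 (by norm_num)
  set S : Finset ℝ :=
    insert 3 (insert a (insert b (hfin3.toFinset.image (Zr T)))) with hSdef
  have hSne : S.Nonempty := ⟨3, by simp [hSdef]⟩
  set τ := S.min' hSne with hτdef
  have hτ2 : 2 < τ := by
    have hall : ∀ x ∈ S, 2 < x := by
      intro x hx
      simp only [hSdef, Finset.mem_insert, Finset.mem_image] at hx
      rcases hx with rfl | rfl | rfl | ⟨w, _, rfl⟩
      · norm_num
      · exact ha
      · exact hb
      · exact (hmaster w).2.2.2.1
    exact hall _ (S.min'_mem hSne)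
  have hτa : τ ≤ a := Finset.min'_le _ _ (by simp [hSdef])
  have hτb : τ ≤ b := Finset.min'_le _ _ (by simp [hSdef])
  have hτ3 : τ ≤ 3 := Finset.min'_le _ _ (by simp [hSdef])
  have hτZ : ∀ w, τ ≤ Zr T w := by
    intro w
    rcases le_or_gt (Zr T w) 3 with h | h
    · refine Finset.min'_le _ _ ?_
      simp only [hSdef, Finset.mem_insert, Finset.mem_image]
      exact Or.inr (Or.inr (Or.inr ⟨w, Set.Finite.mem_toFinset hfin3 |>.2 h, rfl⟩))
    · linarith
  have hτXY : ∀ w, τ ≤ Xr T w ∧ τ ≤ Yr T w := by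
    intro w
    induction w with
    | nil =>
      constructor
      · rw [Xr_nil, hT.map_01]; exact hτa
      · rw [Yr_nil, hT.map_11]; exact hτb
    | cons b' w ih =>
      cases b'
      · exact ⟨ih.1, hτZ w⟩
      · exact ⟨hτZ w, ih.2⟩
  -- depth bound for bad edges
  have hmaxab : 2 < max a b := lt_of_lt_of_le ha (le_max_left _ _)
  have hFm : 0 < Fg (max a b) := Fg_pos hmaxab
  set N0 := ⌈Er T [] / Fg (max a b)⌉₊ with hN0def
  have hnobad : ∀ w : List Bool, N0 ≤ w.length → ¬ BadE T w := by
    intro w hlen hbad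
    set t : Finset (List Bool) :=
      (Finset.range (w.length + 1)).image (fun k => w.drop k) with htdef
    have hcard : t.card = w.length + 1 := by
      rw [htdef, Finset.card_image_of_injOn, Finset.card_range]
      intro k hk k' hk' h
      have h1 := congrArg List.length h
      rw [List.length_drop, List.length_drop] at h1
      rw [Finset.mem_coe, Finset.mem_range] at hk hk'
      omega
    have hge : ∀ u ∈ t, Fg (max a b) ≤ gr T u := by
      intro u hu
      rw [htdef, Finset.mem_image] at hu
      obtain ⟨k, _, rfl⟩ := hu
      have hbadu : BadE T (w.drop k) := bad_drop ha hb hc habc hT w k hbad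
      have hzle : Zr T (w.drop k) ≤ max a b :=
        le_trans (le_of_lt hbadu) (bad_bound ha hb hc habc hT _ hbadu)
      exact Fg_anti (hmaster _).2.2.2.1 hzle
    have h1 := Finset.card_nsmul_le_sum t (gr T) (Fg (max a b)) hge
    have h2 := sum_g_le ha hb hc habc hT t
    rw [hcard, nsmul_eq_mul] at h1
    have h3 : Er T [] / Fg (max a b) ≤ (N0 : ℝ) := Nat.le_ceil _
    rw [div_le_iff₀ hFm] at h3
    push_cast at h1
    have h4 : (N0 : ℝ) ≤ (w.length : ℝ) := by exact_mod_cast hlen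
    nlinarith
  -- depth bound for small-root edges
  have hB0 : 2 < 4 + 8/(τ-2) := by
    have : 0 < 8/(τ-2) := div_pos (by norm_num) (by linarith)
    linarith
  have hfinB : {w : List Bool | Zr T w ≤ 4 + 8/(τ-2)}.Finite :=
    finite_small ha hb hc habc hT _ hB0
  obtain ⟨N1, hN1⟩ := (hfinB.image List.length).bddAbove
  simp only [upperBounds, Set.mem_image, Set.mem_setOf_eq] at hN1
  -- the comparison constant
  set C := 4*τ^2/(τ^2-4) with hCdef
  have hdeep : ∀ w : List Bool, N0 ≤ w.length → N1 < w.length →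
      Er T w ≤ C * gr T w := by
    intro w h0 h1
    obtain ⟨hx, hy, hw', hz, hM⟩ := hmaster w
    have hnb := hnobad w h0
    rw [BadE, not_lt, max_le_iff] at hnb
    have hroot : Xr T w * Yr T w ≤ 2 * Zr T w := by
      by_contra hcon
      push_neg at hcon
      have hsz := smallz_core hτ2 (hτXY w).1 (hτXY w).2 hz hM hnb.1 hnb.2 hcon
      have : w.length ≤ N1 := hN1 ⟨w, hsz, rfl⟩
      omega
    exact E_le hτ2 (hτXY w).1 (hτXY w).2 hz hM hroot
  -- Bn ≤ C * Gn for large n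
  have hBG : ∀ n, max N0 (N1+1) ≤ n → Bn T n ≤ C * Gn T n := by
    intro n hn
    rw [Bn, Gn, Finset.mul_sum]
    apply Finset.sum_le_sum
    intro f _
    have hlen : (List.ofFn f).length = n := by simp
    exact hdeep _ (by omega) (by omega)
  -- limits
  have hGsum : Summable (Gn T) :=
    summable_of_sum_range_le (fun n => Gn_nonneg ha hb hc habc hT n)
      (fun n => sum_range_Gn_le ha hb hc habc hT n)
  have hGto := hGsum.tendsto_atTop_zero
  have hBto : Filter.Tendsto (Bn T) Filter.atTop (nhds 0) := by
    have hCG : Filter.Tendsto (fun n => C * Gn T n) Filter.atTop (nhds 0) := by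
      have := hGto.const_mul C
      simpa using this
    apply tendsto_of_tendsto_of_tendsto_of_le_of_le' tendsto_const_nhds hCG
    · exact Filter.Eventually.of_forall (fun n => Bn_nonneg ha hb hc habc hT n)
    · exact Filter.eventually_atTop.2 ⟨max N0 (N1+1), hBG⟩
  have hSto : Filter.Tendsto (fun n => ∑ k ∈ Finset.range n, Gn T k)
      Filter.atTop (nhds (Er T [])) := by
    have heq : ∀ n, ∑ k ∈ Finset.range n, Gn T k = Er T [] - Bn T n := by
      intro n
      have := Sn_id ha hb hc habc hT n
      linarith
    simp only [heq]
    have hconst : Filter.Tendsto (fun _ : ℕ => Er T []) Filter.atTop (nhds (Er T [])) :=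
      tendsto_const_nhds
    have := hconst.sub hBto
    simpa using this
  -- LUB
  have hlub : IsLUB (Set.range fun s : Finset (List Bool) => ∑ w ∈ s, gr T w)
      (Er T []) := by
    constructor
    · rintro x ⟨s, rfl⟩
      exact sum_g_le ha hb hc habc hT s
    · intro ub hub
      refine le_of_tendsto hSto (Filter.Eventually.of_forall fun n => ?_)
      have heq2 : ∑ k ∈ Finset.range n, Gn T k = ∑ w ∈ Un n, gr T w := by
        rw [sum_Un]
        apply Finset.sum_congr rfl
        intro k _
        rw [sum_Lev, Gn]
      rw [heq2]
      exact hub ⟨Un n, rfl⟩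
  have hHasSum : HasSum (fun w : List Bool => gr T w) (Er T []) :=
    hasSum_of_isLUB_of_nonneg _ (fun w => (gr_pos ha hb hc habc hT w).le) hlub
  -- transport along the Stern–Brocot equivalence
  have hprops : ∀ w : List Bool, 0 < (nd w).1 ∧ (nd w).1 < (nd w).2 ∧
      IsCoprime (nd w).1 (nd w).2 := by
    intro w
    obtain ⟨a1, a2, a3, a4, a5, a6, a7⟩ := edge_P w
    refine ⟨?_, ?_, prim_nd w⟩
    · simp only [nd, Prod.fst_add]; omega
    · simp only [nd, Prod.fst_add, Prod.snd_add]; omega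
  let e : List Bool ≃ {v : ℤ × ℤ // 0 < v.1 ∧ v.1 < v.2 ∧ IsCoprime v.1 v.2} :=
    Equiv.ofBijective (fun w => ⟨nd w, hprops w⟩)
      ⟨fun w w' h => nd_inj (congrArg Subtype.val h),
       fun v => by
        obtain ⟨w, hw⟩ := nd_surj v.1.1 v.1.2 v.2.1 v.2.2.1 v.2.2.2
        exact ⟨w, Subtype.ext (hw.trans (Prod.mk.eta))⟩⟩
  have hcomp : ((fun v : {v : ℤ × ℤ // 0 < v.1 ∧ v.1 < v.2 ∧ IsCoprime v.1 v.2} =>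
      1 - Real.sqrt (1 - 4 / T v.val ^ 2)) ∘ ⇑e) = fun w => gr T w := by
    funext w
    rfl
  have hfinal : HasSum
      (fun v : {v : ℤ × ℤ // 0 < v.1 ∧ v.1 < v.2 ∧ IsCoprime v.1 v.2} =>
        1 - Real.sqrt (1 - 4 / T v.val ^ 2)) (Er T []) := by
    apply (Equiv.hasSum_iff e).1
    rw [hcomp]
    exact hHasSum
  rw [Er_nil_eq ha hb hc habc hT] at hfinal
  exact hfinal
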